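/- Let q be odd and k ≥ 1. The subgroup H_k = {f ∈ (F_q[S]/(S^k))^× : f(−S) = f(S) mod S^k} has order (q−1)·q^⌊(k−1)/2⌋. -/

import Mathlib

open Polynomial

set_option maxRecDepth 4000

/-- The Galois-type involution `σ : S ↦ -S` on `F_q[S]/(S^k)`. -/
noncomputable def sigmaMap (Fq : Type) [Field Fq] (k : ℕ) :
    AdjoinRoot (X ^ k : Polynomial Fq) →+* AdjoinRoot (X ^ k : Polynomial Fq) :=
  AdjoinRoot.lift (AdjoinRoot.of _) (-(AdjoinRoot.root _)) (by
    have h : (AdjoinRoot.root (X ^ k : Polynomial Fq)) ^ k = 0 := by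
      have := AdjoinRoot.eval₂_root (X ^ k : Polynomial Fq)
      simpa using this
    rw [Polynomial.eval₂_X_pow, neg_pow, h, mul_zero])

/-- Evaluation at `0` (the constant term), as a ring homomorphism `F_q[S]/(S^k) → F_q`. -/
noncomputable def ev0 (Fq : Type) [Field Fq] (k : ℕ) (hk : k ≠ 0) :
    AdjoinRoot (X ^ k : Polynomial Fq) →+* Fq :=
  AdjoinRoot.lift (RingHom.id Fq) 0 (by rw [Polynomial.eval₂_X_pow, zero_pow hk])

section Aux

variable {Fq : Type} [Field Fq] {k : ℕ}

lemma root_pow_k : (AdjoinRoot.root (X ^ k : Polynomial Fq)) ^ k = 0 := by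
  have h := AdjoinRoot.mk_self (f := (X ^ k : Polynomial Fq))
  rwa [map_pow, AdjoinRoot.mk_X] at h

lemma sigma_mk (p : Polynomial Fq) :
    sigmaMap Fq k (AdjoinRoot.mk _ p) = AdjoinRoot.mk _ (p.comp (-X)) := by
  rw [sigmaMap, AdjoinRoot.lift_mk, ← AdjoinRoot.aeval_eq, aeval_comp]
  simp [aeval_def, AdjoinRoot.algebraMap_eq]

lemma ev0_mk (hk : k ≠ 0) (p : Polynomial Fq) :
    ev0 Fq k hk (AdjoinRoot.mk _ p) = p.coeff 0 := by
  rw [ev0, AdjoinRoot.lift_mk]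
  simp [eval₂_at_zero]

lemma mk_rep (hk : 1 ≤ k) (x : AdjoinRoot (X ^ k : Polynomial Fq)) :
    ∃ p : Polynomial Fq, AdjoinRoot.mk _ p = x ∧ p.natDegree < k := by
  obtain ⟨q, hq⟩ := AdjoinRoot.mk_surjective (g := (X ^ k : Polynomial Fq)) x
  refine ⟨q %ₘ (X ^ k), ?_, ?_⟩
  · rw [← hq, AdjoinRoot.mk_eq_mk, modByMonic_eq_sub_mul_div _ (X ^ k)]
    exact ⟨-(q /ₘ X ^ k), by ring⟩
  · rcases eq_or_ne (q %ₘ (X ^ k)) 0 with h | h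
    · simpa [h] using Nat.lt_of_lt_of_le Nat.zero_lt_one hk
    · have := degree_modByMonic_lt q (monic_X_pow k (R := Fq))
      rw [degree_X_pow] at this
      exact (natDegree_lt_iff_degree_lt h).2 this

lemma dvd_eq_zero {p : Polynomial Fq} (hp : p.natDegree < k) (hd : (X : Polynomial Fq) ^ k ∣ p) :
    p = 0 := by
  by_contra h
  have := natDegree_le_of_dvd hd h
  rw [natDegree_X_pow] at this
  omega

end Aux

section Aux2

variable {Fq : Type} [Field Fq] {k : ℕ}

noncomputable def Pv {m : ℕ} (v : Fin (m+1) → Fq) : Polynomial Fq :=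
  ∑ j : Fin (m+1), C (v j) * X ^ (2 * (j : ℕ))

lemma Pv_coeff {m : ℕ} (v : Fin (m+1) → Fq) (n : ℕ) :
    (Pv v).coeff n = ∑ j : Fin (m+1), if n = 2 * (j:ℕ) then v j else 0 := by
  rw [Pv, finset_sum_coeff]
  refine Finset.sum_congr rfl fun j _ => ?_
  rw [coeff_C_mul, coeff_X_pow]
  split <;> simp

lemma Pv_coeff_even {m : ℕ} (v : Fin (m+1) → Fq) (j : Fin (m+1)) :
    (Pv v).coeff (2 * (j:ℕ)) = v j := by
  rw [Pv_coeff, Finset.sum_eq_single j]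
  · simp
  · intro j' _ hne
    rw [if_neg]
    intro h
    exact hne (Fin.ext (by omega))
  · simp

lemma Pv_natDegree {m : ℕ} (v : Fin (m+1) → Fq) : (Pv v).natDegree ≤ 2 * m := by
  refine natDegree_sum_le_of_forall_le _ _ fun j _ => ?_
  refine le_trans (natDegree_C_mul_X_pow_le _ _) ?_
  have := j.2
  omega

lemma Pv_comp {m : ℕ} (v : Fin (m+1) → Fq) : (Pv v).comp (-X) = Pv v := by
  rw [Pv, comp, eval₂_finset_sum]
  refine Finset.sum_congr rfl fun j _ => ?_
  rw [eval₂_mul, eval₂_C, eval₂_X_pow, Even.neg_pow ⟨(j:ℕ), two_mul _⟩]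

lemma coeff_comp_neg_X (p : Polynomial Fq) (n : ℕ) :
    (p.comp (-X)).coeff n = (-1)^n * p.coeff n := by
  rw [comp_eq_sum_left, Polynomial.sum_def, finset_sum_coeff]
  have key : ∀ e ∈ p.support, (C (p.coeff e) * (-X : Polynomial Fq) ^ e).coeff n
      = if e = n then (-1)^n * p.coeff n else 0 := by
    intro e _
    have h1 : (-X : Polynomial Fq) ^ e = C ((-1)^e) * X ^ e := by
      rw [neg_pow, map_pow, map_neg, map_one]
    rw [h1, ← mul_assoc, mul_comm (C (p.coeff e)), mul_assoc, coeff_C_mul, coeff_C_mul,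
      coeff_X_pow]
    by_cases h : n = e
    · subst h; simp
    · simp [h, Ne.symm h]
  rw [Finset.sum_congr rfl key, Finset.sum_ite_eq' p.support n (fun _ => (-1)^n * p.coeff n)]
  by_cases h : n ∈ p.support
  · simp [h]
  · rw [if_neg h]
    rw [Polynomial.notMem_support_iff.1 h, mul_zero]

lemma odd_coeff_zero (h2 : (2:Fq) ≠ 0) {p : Polynomial Fq} (hp : p.comp (-X) = p)
    {n : ℕ} (hn : Odd n) : p.coeff n = 0 := by
  have h := coeff_comp_neg_X p n
  rw [hp, hn.neg_one_pow, neg_one_mul] at h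
  have h2' : (2:Fq) * p.coeff n = 0 := by linear_combination h
  rcases mul_eq_zero.1 h2' with h | h
  · exact absurd h h2
  · exact h

lemma eq_Pv (hk : 1 ≤ k) {p : Polynomial Fq} (hdeg : p.natDegree < k)
    (hodd : ∀ n, Odd n → p.coeff n = 0) :
    p = Pv (fun j : Fin ((k-1)/2 + 1) => p.coeff (2 * (j:ℕ))) := by
  ext n
  rw [Pv_coeff]
  rcases Nat.even_or_odd n with he | ho
  · obtain ⟨j0, hj0⟩ := he
    by_cases hj : j0 ≤ (k-1)/2
    · rw [Finset.sum_eq_single (⟨j0, by omega⟩ : Fin ((k-1)/2 + 1))]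
      · rw [if_pos (by simp; omega)]
        congr 1
        simp; omega
      · intro j' _ hne
        rw [if_neg]
        intro h
        exact hne (Fin.ext (by simp; omega))
      · simp
    · have hnk : p.natDegree < n := by omega
      rw [coeff_eq_zero_of_natDegree_lt hnk]
      symm
      apply Finset.sum_eq_zero
      intro j _
      rw [if_neg]
      have := j.2
      omega
  · rw [hodd n ho]
    symm
    apply Finset.sum_eq_zero
    intro j _
    rw [if_neg]
    obtain ⟨t, ht⟩ := ho
    omega

end Aux2

section Aux3

variable {Fq : Type} [Field Fq] {k : ℕ}

lemma sigma_fixed_iff {p : Polynomial Fq} (hdeg : p.natDegree < k) :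
    sigmaMap Fq k (AdjoinRoot.mk _ p) = AdjoinRoot.mk _ p ↔ p.comp (-X) = p := by
  rw [sigma_mk, AdjoinRoot.mk_eq_mk]
  constructor
  · intro h
    have h1 : (p.comp (-X)).natDegree ≤ p.natDegree := by
      rw [natDegree_comp]
      simp
    have h2 := natDegree_sub_le (p.comp (-X)) p
    have h3 : (p.comp (-X) - p).natDegree < k := by
      omega
    have := dvd_eq_zero h3 h
    exact sub_eq_zero.1 this
  · intro h
    rw [h, sub_self]
    exact dvd_zero _

lemma isUnit_mk_iff (hk : 1 ≤ k) {p : Polynomial Fq} :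
    IsUnit (AdjoinRoot.mk (X ^ k : Polynomial Fq) p) ↔ p.coeff 0 ≠ 0 := by
  constructor
  · intro h hc
    have h2 := h.map (ev0 Fq k (by omega))
    rw [ev0_mk, hc] at h2
    exact not_isUnit_zero h2
  · intro h
    have hsplit : AdjoinRoot.mk (X ^ k : Polynomial Fq) p
        = AdjoinRoot.mk _ (p - C (p.coeff 0)) + AdjoinRoot.of _ (p.coeff 0) := by
      rw [← AdjoinRoot.mk_C (f := (X ^ k : Polynomial Fq)), ← map_add, sub_add_cancel]
    obtain ⟨g, hg⟩ : (X : Polynomial Fq) ∣ p - C (p.coeff 0) := X_dvd_iff.2 (by simp)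
    have hnil : IsNilpotent (AdjoinRoot.mk (X ^ k : Polynomial Fq) (p - C (p.coeff 0))) := by
      refine ⟨k, ?_⟩
      rw [hg, map_mul, mul_pow, AdjoinRoot.mk_X, root_pow_k, zero_mul]
    have hu : IsUnit (AdjoinRoot.of (X ^ k : Polynomial Fq) (p.coeff 0)) :=
      (isUnit_iff_ne_zero.2 h).map _
    rw [hsplit]
    exact add_comm ((AdjoinRoot.of (X ^ k : Polynomial Fq)) (p.coeff 0)) _ ▸ hnil.isUnit_add_left_of_commute hu (Commute.all _ _)

lemma two_ne_zero_of_oddCard [Fintype Fq] (hq : Odd (Fintype.card Fq)) : (2 : Fq) ≠ 0 := by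
  intro h
  have hchar : (ringChar Fq : ℕ) ∣ 2 := by
    have := (ringChar.spec Fq 2)
    rw [Nat.cast_ofNat] at this
    exact this.1 h
  have hprime := CharP.char_is_prime Fq (ringChar Fq)
  have h2 : ringChar Fq = 2 := ((Nat.prime_dvd_prime_iff_eq hprime Nat.prime_two).1 hchar)
  obtain ⟨n, hp, hcard⟩ := FiniteField.card Fq (ringChar Fq)
  rw [h2] at hcard
  rw [hcard] at hq
  exact (Nat.not_odd_iff_even.2 (Nat.even_pow.2 ⟨even_iff_two_dvd.2 dvd_rfl, n.2.ne'⟩)) hq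

end Aux3

noncomputable def evenSubgroup (Fq : Type) [Field Fq] (k : ℕ) :
    Subgroup (AdjoinRoot (X ^ k : Polynomial Fq))ˣ where
  carrier := {f : (AdjoinRoot (X ^ k : Polynomial Fq))ˣ |
    sigmaMap Fq k (f : AdjoinRoot (X ^ k : Polynomial Fq)) = f}
  one_mem' := by simp
  mul_mem' := by
    intro a b ha hb
    simp only [Set.mem_setOf_eq, Units.val_mul, map_mul] at *
    rw [ha, hb]
  inv_mem' := by
    intro u hu
    simp only [Set.mem_setOf_eq] at *
    have h1 : sigmaMap Fq k ↑u⁻¹ * ↑u = 1 := by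
      conv_lhs => rw [← hu]
      rw [← map_mul, Units.inv_mul, map_one]
    calc sigmaMap Fq k ↑u⁻¹ = sigmaMap Fq k ↑u⁻¹ * (↑u * ↑u⁻¹) := by
          rw [Units.mul_inv, mul_one]
      _ = (sigmaMap Fq k ↑u⁻¹ * ↑u) * ↑u⁻¹ := by ring
      _ = ↑u⁻¹ := by rw [h1, one_mul]

/-- For `q` odd and `k ≥ 1`, the subgroup `H_k = {f ∈ (F_q[S]/(S^k))^× : f(−S) = f(S)}`
of invertible even polynomials has order `(q−1)·q^⌊(k−1)/2⌋`. -/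
theorem stmt_7 (Fq : Type) [Field Fq] [Fintype Fq] (hq : Odd (Fintype.card Fq))
    (k : ℕ) (hk : 1 ≤ k) :
    ∃ H : Subgroup (AdjoinRoot (X ^ k : Polynomial Fq))ˣ,
      (∀ f : (AdjoinRoot (X ^ k : Polynomial Fq))ˣ,
        f ∈ H ↔ sigmaMap Fq k (f : AdjoinRoot (X ^ k : Polynomial Fq)) =
          (f : AdjoinRoot (X ^ k : Polynomial Fq))) ∧
      Nat.card H = (Fintype.card Fq - 1) * Fintype.card Fq ^ ((k - 1) / 2) := by
  set m := (k-1)/2 with hm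
  refine ⟨evenSubgroup Fq k, fun f => Iff.rfl, ?_⟩
  have h2 : (2 : Fq) ≠ 0 := two_ne_zero_of_oddCard hq
  have hmk : 2 * m < k := by omega
  -- the parametrization
  have hPv0 : ∀ v : Fin (m+1) → Fq, (Pv v).coeff 0 = v 0 := by
    intro v
    have := Pv_coeff_even v 0
    simpa using this
  have hUnit : ∀ v : {v : Fin (m+1) → Fq // v 0 ≠ 0},
      IsUnit (AdjoinRoot.mk (X ^ k : Polynomial Fq) (Pv v.1)) := by
    intro v
    exact (isUnit_mk_iff hk).2 (by rw [hPv0]; exact v.2)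
  set F : {v : Fin (m+1) → Fq // v 0 ≠ 0} →
      {u : (AdjoinRoot (X ^ k : Polynomial Fq))ˣ //
        sigmaMap Fq k (u : AdjoinRoot (X ^ k : Polynomial Fq)) = u} :=
    fun v => ⟨(hUnit v).unit, by
      rw [IsUnit.unit_spec, sigma_mk, Pv_comp]⟩ with hF
  have hFval : ∀ v, ((F v).1 : AdjoinRoot (X ^ k : Polynomial Fq))
      = AdjoinRoot.mk _ (Pv v.1) := fun v => IsUnit.unit_spec _
  have hbij : Function.Bijective F := by
    constructor
    · intro v w hvw
      have h1 : AdjoinRoot.mk (X ^ k : Polynomial Fq) (Pv v.1)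
          = AdjoinRoot.mk _ (Pv w.1) := by
        rw [← hFval v, ← hFval w, hvw]
      rw [AdjoinRoot.mk_eq_mk] at h1
      have hdeg : (Pv v.1 - Pv w.1).natDegree < k := by
        have := natDegree_sub_le (Pv v.1) (Pv w.1)
        have h1 := Pv_natDegree v.1
        have h2 := Pv_natDegree w.1
        omega
      have h0 := dvd_eq_zero hdeg h1
      have hPP : Pv v.1 = Pv w.1 := sub_eq_zero.1 h0
      refine Subtype.ext (funext fun j => ?_)
      rw [← Pv_coeff_even v.1 j, ← Pv_coeff_even w.1 j, hPP]
    · rintro ⟨u, hu⟩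
      obtain ⟨p, hp, hpdeg⟩ := mk_rep hk (u : AdjoinRoot (X ^ k : Polynomial Fq))
      have hfix : p.comp (-X) = p := by
        rw [← sigma_fixed_iff hpdeg]
        rw [hp]
        exact hu
      have hodd : ∀ n, Odd n → p.coeff n = 0 := fun n hn => odd_coeff_zero h2 hfix hn
      have hpPv := eq_Pv hk hpdeg hodd
      have hc0 : p.coeff 0 ≠ 0 := by
        refine (isUnit_mk_iff hk).1 ?_
        rw [hp]
        exact u.isUnit
      refine ⟨⟨fun j => p.coeff (2 * (j:ℕ)), by simpa using hc0⟩, ?_⟩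
      refine Subtype.ext (Units.ext ?_)
      rw [hFval]
      rw [← hpPv, hp]
  have hcard1 : Nat.card {u : (AdjoinRoot (X ^ k : Polynomial Fq))ˣ //
        sigmaMap Fq k (u : AdjoinRoot (X ^ k : Polynomial Fq)) = u}
      = Nat.card {v : Fin (m+1) → Fq // v 0 ≠ 0} :=
    (Nat.card_congr (Equiv.ofBijective F hbij)).symm
  have e2 : {v : Fin (m+1) → Fq // v 0 ≠ 0} ≃ {c : Fq // c ≠ 0} × (Fin m → Fq) :=
    { toFun := fun v => (⟨v.1 0, v.2⟩, fun j => v.1 j.succ)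
      invFun := fun cw => ⟨Fin.cons cw.1.1 cw.2, by simpa using cw.1.2⟩
      left_inv := by
        rintro ⟨v, hv⟩
        refine Subtype.ext (funext fun i => ?_)
        refine Fin.cases ?_ ?_ i <;> simp
      right_inv := by
        rintro ⟨⟨c, hc⟩, w⟩
        refine Prod.ext (Subtype.ext ?_) (funext fun j => ?_) <;> simp }
  have hcard2 : Nat.card {v : Fin (m+1) → Fq // v 0 ≠ 0}
      = (Fintype.card Fq - 1) * Fintype.card Fq ^ m := by
    rw [Nat.card_congr e2, Nat.card_prod]
    congr 1
    · rw [← Nat.card_congr (unitsEquivNeZero (G₀ := Fq)), Nat.card_units,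
        Nat.card_eq_fintype_card]
    · rw [Nat.card_eq_fintype_card]
      simp [Fintype.card_fun]
  exact hcard1.trans hcard2
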